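/- The controllability matrix H₂ = [[t²/2, 3t²/2, …, (2m+1)t²/2],[t, t, …, t]] ⊗ I₂ with m ≥ 1 columns of blocks has rank 4; consequently, for any symmetric positive definite Q̂ with q̂·I ≤ Q̂ ≤ q̌·I, the Gramian H₂Q̂H₂ᵀ satisfies Λ₃·I₄ ≤ H₂Q̂H₂ᵀ ≤ Λ₄·I₄ for some positive constants Λ₃, Λ₄. -/

import Mathlib

open Matrix Kronecker

lemma psd_smul {n : Type*} [Fintype n] {M : Matrix n n ℝ} (h : M.PosSemidef)
    {a : ℝ} (ha : 0 ≤ a) : (a • M).PosSemidef := by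
  rw [posSemidef_iff_dotProduct_mulVec]
  constructor
  · simp [Matrix.IsHermitian, Matrix.conjTranspose_smul, h.1.eq]
    rw [show Mᵀ = M from h.1.eq]
  · intro x
    simp only [smul_mulVec, dotProduct_smul, smul_eq_mul]
    exact mul_nonneg ha (h.dotProduct_mulVec_nonneg x)

lemma aux_diag {n : Type*} [Fintype n] [DecidableEq n] (c : ℝ) :
    c • (1 : Matrix n n ℝ) = diagonal (fun _ => c) := by
  ext i j
  simp [Matrix.one_apply, Matrix.diagonal_apply, mul_ite]

lemma aux_low {n : Type*} [Fintype n] [DecidableEq n]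
    {A : Matrix n n ℝ} (hA : A.IsHermitian) {c : ℝ}
    (h : ∀ i, c ≤ hA.eigenvalues i) : (A - c • 1).PosSemidef := by
  set U : Matrix n n ℝ := (hA.eigenvectorUnitary : Matrix n n ℝ) with hUdef
  have hU : U * star U = 1 := (Matrix.mem_unitaryGroup_iff).mp hA.eigenvectorUnitary.2
  have h1 : U * (c • (1 : Matrix n n ℝ)) * star U = c • (1 : Matrix n n ℝ) := by
    rw [Matrix.mul_smul, Matrix.mul_one, Matrix.smul_mul, hU]
  have key : A - c • 1 = U * (diagonal (fun i => hA.eigenvalues i - c)) * star U := by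
    conv_lhs => rw [hA.spectral_theorem, ← h1]
    rw [Unitary.conjStarAlgAut_apply]
    rw [← Matrix.sub_mul, ← Matrix.mul_sub]
    congr 2
    rw [aux_diag, diagonal_sub]
    congr
  rw [key, Matrix.star_eq_conjTranspose]
  exact (posSemidef_diagonal_iff.mpr fun i => sub_nonneg.2 (h i)).mul_mul_conjTranspose_same U

lemma aux_high {n : Type*} [Fintype n] [DecidableEq n]
    {A : Matrix n n ℝ} (hA : A.IsHermitian) {c : ℝ}
    (h : ∀ i, hA.eigenvalues i ≤ c) : (c • 1 - A).PosSemidef := by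
  set U : Matrix n n ℝ := (hA.eigenvectorUnitary : Matrix n n ℝ) with hUdef
  have hU : U * star U = 1 := (Matrix.mem_unitaryGroup_iff).mp hA.eigenvectorUnitary.2
  have h1 : U * (c • (1 : Matrix n n ℝ)) * star U = c • (1 : Matrix n n ℝ) := by
    rw [Matrix.mul_smul, Matrix.mul_one, Matrix.smul_mul, hU]
  have key : c • 1 - A = U * (diagonal (fun i => c - hA.eigenvalues i)) * star U := by
    conv_lhs => rw [hA.spectral_theorem, ← h1]
    rw [Unitary.conjStarAlgAut_apply]
    rw [← Matrix.sub_mul, ← Matrix.mul_sub]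
    congr 2
    rw [aux_diag, diagonal_sub]
    congr
  rw [key, Matrix.star_eq_conjTranspose]
  exact (posSemidef_diagonal_iff.mpr fun i => sub_nonneg.2 (h i)).mul_mul_conjTranspose_same U


/-- the controllability matrix
H₂ = [[t²/2, 3t²/2, …, (2m+1)t²/2],[t, …, t]] ⊗ I₂ has rank 4, and for any
symmetric positive definite Q̂ with q̂·I ≤ Q̂ ≤ q̌·I the Gramian H₂Q̂H₂ᵀ
satisfies Λ₃·I ≤ H₂Q̂H₂ᵀ ≤ Λ₄·I for some Λ₃, Λ₄ > 0. -/
theorem stmt17 (t : ℝ) (ht : 0 < t) (m : ℕ) (hm : 1 ≤ m)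
    (H : Matrix (Fin 2 × Fin 2) (Fin (m + 1) × Fin 2) ℝ)
    (hH : H = (Matrix.of fun (i : Fin 2) (k : Fin (m + 1)) =>
        if i = 0 then (2 * (k : ℕ) + 1) * t ^ 2 / 2 else t)
      ⊗ₖ (1 : Matrix (Fin 2) (Fin 2) ℝ))
    (Qhat : Matrix (Fin (m + 1) × Fin 2) (Fin (m + 1) × Fin 2) ℝ)
    (hQhat : Qhat.PosDef) (qlo qhi : ℝ) (hqlo : 0 < qlo)
    (hQlo : (Qhat - qlo • (1 : Matrix (Fin (m + 1) × Fin 2) (Fin (m + 1) × Fin 2) ℝ)).PosSemidef)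
    (hQhi : (qhi • (1 : Matrix (Fin (m + 1) × Fin 2) (Fin (m + 1) × Fin 2) ℝ) - Qhat).PosSemidef) :
    H.rank = 4 ∧
    ∃ Λ₃ Λ₄ : ℝ, 0 < Λ₃ ∧ 0 < Λ₄ ∧
      (H * Qhat * Hᵀ - Λ₃ • (1 : Matrix (Fin 2 × Fin 2) (Fin 2 × Fin 2) ℝ)).PosSemidef ∧
      (Λ₄ • (1 : Matrix (Fin 2 × Fin 2) (Fin 2 × Fin 2) ℝ) - H * Qhat * Hᵀ).PosSemidef := by
  -- kernel of vecMul is trivial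
  have hker : ∀ x : Fin 2 × Fin 2 → ℝ, x ᵥ* H = 0 → x = 0 := by
    intro x hx
    have key : ∀ l : Fin 2, x (0, l) = 0 ∧ x (1, l) = 0 := by
      intro l
      have e0 := congrFun hx ((⟨0, by omega⟩ : Fin (m+1)), l)
      have e1 := congrFun hx ((⟨1, by omega⟩ : Fin (m+1)), l)
      simp [hH, vecMul, dotProduct, Fintype.sum_prod_type, Fin.sum_univ_two,
        kroneckerMap_apply, Matrix.one_apply] at e0 e1
      have ht2 : (0:ℝ) < t ^ 2 := by positivity
      constructor
      · nlinarith [e0, e1]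
      · nlinarith [e0, e1]
    funext p
    obtain ⟨i, l⟩ := p
    fin_cases i
    · simpa using (key l).1
    · simpa using (key l).2
  set P := H * Hᵀ with hP
  have hPdef : P.PosDef := by
    rw [posDef_iff_dotProduct_mulVec]
    refine ⟨?_, ?_⟩
    · rw [hP, show Hᵀ = Hᴴ from (Matrix.conjTranspose_eq_transpose_of_trivial H).symm]
      exact Matrix.isHermitian_mul_conjTranspose_self H
    · intro x hx
      have hv : x ᵥ* H ≠ 0 := fun h => hx (hker x h)
      have : star x ⬝ᵥ P *ᵥ x = (x ᵥ* H) ⬝ᵥ (x ᵥ* H) := by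
        rw [hP, ← mulVec_mulVec, dotProduct_mulVec, mulVec_transpose]
        simp [star_trivial]
      rw [this]
      exact (dotProduct_self_star_pos_iff (v := x ᵥ* H)).mpr hv |>.trans_eq (by simp)
  have hherm := hPdef.1
  -- rank
  have hrank : H.rank = 4 := by
    have h1 : (H * Hᵀ).rank = H.rank := Matrix.rank_self_mul_transpose H
    have h2 : IsUnit P := (Matrix.isUnit_iff_isUnit_det P).mpr
      (isUnit_iff_ne_zero.mpr hPdef.det_pos.ne')
    have h3 := Matrix.rank_of_isUnit P h2
    rw [← h1, ← hP, h3]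
    simp
  refine ⟨hrank, ?_⟩
  -- eigenvalue bounds of P
  obtain ⟨imin, -, hmin⟩ := Finset.exists_min_image Finset.univ hherm.eigenvalues
    ⟨(0, 0), Finset.mem_univ _⟩
  obtain ⟨imax, -, hmax⟩ := Finset.exists_max_image Finset.univ hherm.eigenvalues
    ⟨(0, 0), Finset.mem_univ _⟩
  set c := hherm.eigenvalues imin with hc
  set C := hherm.eigenvalues imax with hC
  have hcpos : 0 < c := hPdef.eigenvalues_pos imin
  have hCpos : 0 < C := hPdef.eigenvalues_pos imax
  have hlow : (P - c • 1).PosSemidef := aux_low hherm fun i => hmin i (Finset.mem_univ i)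
  have hhigh : (C • 1 - P).PosSemidef := aux_high hherm fun i => hmax i (Finset.mem_univ i)
  -- qhi ≥ qlo > 0
  have hqhi : 0 < qhi := by
    have hsum := (hQhi.add hQlo).dotProduct_mulVec_nonneg (Pi.single ((0 : Fin (m+1)), (0 : Fin 2)) 1)
    have : qhi • (1 : Matrix (Fin (m + 1) × Fin 2) (Fin (m + 1) × Fin 2) ℝ) - Qhat
        + (Qhat - qlo • 1) = (qhi - qlo) • 1 := by rw [sub_smul]; abel
    rw [this] at hsum
    simp [Matrix.smul_mulVec, dotProduct_smul, Pi.single_apply] at hsum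
    linarith
  have hHconj : Hᴴ = Hᵀ := Matrix.conjTranspose_eq_transpose_of_trivial H
  refine ⟨qlo * c, qhi * C, by positivity, by positivity, ?_, ?_⟩
  · have e : H * Qhat * Hᵀ - (qlo * c) • (1 : Matrix (Fin 2 × Fin 2) (Fin 2 × Fin 2) ℝ)
        = H * (Qhat - qlo • 1) * Hᵀ + qlo • (P - c • 1) := by
      rw [Matrix.mul_sub, Matrix.sub_mul, Matrix.mul_smul, Matrix.smul_mul, Matrix.mul_one,
        smul_sub, smul_smul, ← hP]
      abel
    rw [e]
    exact ((hHconj ▸ hQlo.mul_mul_conjTranspose_same H)).add (psd_smul hlow hqlo.le)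
  · have e : (qhi * C) • (1 : Matrix (Fin 2 × Fin 2) (Fin 2 × Fin 2) ℝ) - H * Qhat * Hᵀ
        = H * (qhi • 1 - Qhat) * Hᵀ + qhi • (C • 1 - P) := by
      rw [Matrix.mul_sub, Matrix.sub_mul, Matrix.mul_smul, Matrix.smul_mul, Matrix.mul_one,
        smul_sub, smul_smul, ← hP]
      abel
    rw [e]
    exact ((hHconj ▸ hQhi.mul_mul_conjTranspose_same H)).add (psd_smul hhigh hqhi.le)
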